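/- In Example 1, the function S₁ := −λ(Z₁) = π(x₁² + y₁² + c₂) on M = {G₁ = c₁, G₂ = c₂} (with c₁ > c₂ > 0) attains its maximum value π(√c₁ + c₂) exactly on the set {(x,y) ∈ M : x₁²+y₁² = √c₁, x₂ = y₂ = 0, x₃²+y₃² = c₂} and its minimum value π(√(c₁−c₂) + c₂) exactly on the set {(x,y) ∈ M : x₁²+y₁² = √(c₁−c₂), x₂²+y₂² = c₂, x₃ = y₃ = 0}, and these are the only critical submanifolds of S₁ on M. -/

import Mathlib

open Real Complex
noncomputable section

/-- The Liouville 1-form `λ = (1/2) Σ_j (y_j dx_j − x_j dy_j)` on `ℝ⁶ ≃ ℂ³`. -/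
def liouville (p : Fin 3 → ℂ) : (Fin 3 → ℂ) →L[ℝ] ℝ :=
  (1 / 2 : ℝ) • ∑ j : Fin 3,
    ((p j).im • (Complex.reCLM.comp (ContinuousLinearMap.proj j : (Fin 3 → ℂ) →L[ℝ] ℂ)) -
     (p j).re • (Complex.imCLM.comp (ContinuousLinearMap.proj j : (Fin 3 → ℂ) →L[ℝ] ℂ)))

/-- `G₁ = (x₁² + y₁²)² + x₂² + y₂²`. -/
def G₁ (z : Fin 3 → ℂ) : ℝ :=
  ((z 0).re ^ 2 + (z 0).im ^ 2) ^ 2 + (z 1).re ^ 2 + (z 1).im ^ 2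

/-- `G₂ = x₂² + y₂² + x₃² + y₃²`. -/
def G₂ (z : Fin 3 → ℂ) : ℝ :=
  (z 1).re ^ 2 + (z 1).im ^ 2 + (z 2).re ^ 2 + (z 2).im ^ 2

/-- `Z₁(z)_j = 2πi z_j`, i.e. `Z₁ = Σ_{j=1}^{3} (−2πy_j ∂/∂x_j + 2πx_j ∂/∂y_j)`. -/
def Z₁ (z : Fin 3 → ℂ) : Fin 3 → ℂ := fun j => (2 * π : ℝ) * Complex.I * z j

/-- The function `S₁ := −λ(Z₁)`. -/
def S₁ (z : Fin 3 → ℂ) : ℝ := -(liouville z (Z₁ z))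

/-- `M = {G₁ = c₁, G₂ = c₂}`. -/
def Mset (c₁ c₂ : ℝ) : Set (Fin 3 → ℂ) := {z | G₁ z = c₁ ∧ G₂ z = c₂}

/-- `p` is a critical point of `S₁` restricted to `M`: the differential of `S₁` at `p`
vanishes on the tangent space `T_pM = ker dG₁(p) ∩ ker dG₂(p)` (equivalently, by Lagrange
multipliers, `∇S₁(p)` is a linear combination of `∇G₁(p)` and `∇G₂(p)`). -/
def IsCritOnM (c₁ c₂ : ℝ) (p : Fin 3 → ℂ) : Prop :=
  p ∈ Mset c₁ c₂ ∧ ∀ v : Fin 3 → ℂ,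
    fderiv ℝ G₁ p v = 0 → fderiv ℝ G₂ p v = 0 → fderiv ℝ S₁ p v = 0

/-- The maximum set `{z ∈ M : x₁² + y₁² = √c₁, x₂ = y₂ = 0, x₃² + y₃² = c₂}`. -/
def maxSet (c₁ c₂ : ℝ) : Set (Fin 3 → ℂ) :=
  {z ∈ Mset c₁ c₂ | (z 0).re ^ 2 + (z 0).im ^ 2 = Real.sqrt c₁ ∧ z 1 = 0 ∧
    (z 2).re ^ 2 + (z 2).im ^ 2 = c₂}

/-- The minimum set `{z ∈ M : x₁² + y₁² = √(c₁ − c₂), x₂² + y₂² = c₂, x₃ = y₃ = 0}`. -/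
def minSet (c₁ c₂ : ℝ) : Set (Fin 3 → ℂ) :=
  {z ∈ Mset c₁ c₂ | (z 0).re ^ 2 + (z 0).im ^ 2 = Real.sqrt (c₁ - c₂) ∧
    (z 1).re ^ 2 + (z 1).im ^ 2 = c₂ ∧ z 2 = 0}

-- ### Auxiliary machinery

set_option linter.unnecessarySeqFocus false

/-- The real-part coordinate functional. -/
def Rc (j : Fin 3) : (Fin 3 → ℂ) →L[ℝ] ℝ :=
  Complex.reCLM.comp (ContinuousLinearMap.proj j)

/-- The imaginary-part coordinate functional. -/
def Ic (j : Fin 3) : (Fin 3 → ℂ) →L[ℝ] ℝ :=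
  Complex.imCLM.comp (ContinuousLinearMap.proj j)

/-- Differential of `z ↦ |z_j|²`. -/
def Ncl (j : Fin 3) (p : Fin 3 → ℂ) : (Fin 3 → ℂ) →L[ℝ] ℝ :=
  (2*(p j).re) • Rc j + (2*(p j).im) • Ic j

lemma Ncl_apply (j : Fin 3) (p v : Fin 3 → ℂ) :
    Ncl j p v = 2*((p j).re*(v j).re + (p j).im*(v j).im) := by
  simp [Ncl, Rc, Ic]; ring

lemma sq_deriv {f : (Fin 3 → ℂ) → ℝ} {L : (Fin 3 → ℂ) →L[ℝ] ℝ} {p}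
    (h : HasFDerivAt f L p) :
    HasFDerivAt (fun z => f z ^ 2) ((2 * f p) • L) p := by
  have : HasFDerivAt (fun z => f z * f z) (f p • L + f p • L) p := h.mul h
  convert this using 1
  · ext z; ring
  · rw [two_mul, add_smul]

lemma hasFDeriv_nsq (j : Fin 3) (p : Fin 3 → ℂ) :
    HasFDerivAt (fun z : Fin 3 → ℂ => (z j).re ^ 2 + (z j).im ^ 2) (Ncl j p) p :=
  (sq_deriv ((Rc j).hasFDerivAt : HasFDerivAt (fun z : Fin 3 → ℂ => (z j).re) (Rc j) p)).add
   (sq_deriv ((Ic j).hasFDerivAt : HasFDerivAt (fun z : Fin 3 → ℂ => (z j).im) (Ic j) p))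

lemma hasFDeriv_G1 (p : Fin 3 → ℂ) :
    HasFDerivAt G₁ ((2 * ((p 0).re ^ 2 + (p 0).im ^ 2)) • Ncl 0 p + Ncl 1 p) p := by
  have h0 := sq_deriv (hasFDeriv_nsq 0 p)
  have h1re : HasFDerivAt (fun z : Fin 3 → ℂ => (z 1).re) (Rc 1) p := (Rc 1).hasFDerivAt
  have h1im : HasFDerivAt (fun z : Fin 3 → ℂ => (z 1).im) (Ic 1) p := (Ic 1).hasFDerivAt
  have := (h0.add (sq_deriv h1re)).add (sq_deriv h1im)
  convert this using 1 <;> (ext z; simp [G₁, Ncl, Rc, Ic]; try ring)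

lemma hasFDeriv_G2 (p : Fin 3 → ℂ) :
    HasFDerivAt G₂ (Ncl 1 p + Ncl 2 p) p := by
  have := ((sq_deriv ((Rc 1).hasFDerivAt : HasFDerivAt (fun z : Fin 3 → ℂ => (z 1).re) _ p)).add
    (sq_deriv ((Ic 1).hasFDerivAt : HasFDerivAt (fun z : Fin 3 → ℂ => (z 1).im) _ p))).add
    ((sq_deriv ((Rc 2).hasFDerivAt : HasFDerivAt (fun z : Fin 3 → ℂ => (z 2).re) _ p)).add
    (sq_deriv ((Ic 2).hasFDerivAt : HasFDerivAt (fun z : Fin 3 → ℂ => (z 2).im) _ p)))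
  convert this using 1 <;> (ext z; simp [G₂, Ncl, Rc, Ic]; try ring)

lemma S1_eq (z : Fin 3 → ℂ) : S₁ z = π * (((z 0).re^2+(z 0).im^2) +
    ((z 1).re^2+(z 1).im^2) + ((z 2).re^2+(z 2).im^2)) := by
  simp [S₁, liouville, Z₁, Fin.sum_univ_three, ContinuousLinearMap.sub_apply,
    ContinuousLinearMap.smul_apply, ContinuousLinearMap.comp_apply, ContinuousLinearMap.proj_apply,
    ContinuousLinearMap.add_apply, smul_eq_mul]
  ring

lemma hasFDeriv_S1 (p : Fin 3 → ℂ) :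
    HasFDerivAt S₁ (π • (Ncl 0 p + Ncl 1 p + Ncl 2 p)) p := by
  have := (((hasFDeriv_nsq 0 p).add (hasFDeriv_nsq 1 p)).add (hasFDeriv_nsq 2 p)).const_mul π
  convert this using 1 <;> (ext z; simp [S1_eq, Ncl, Rc, Ic]; try ring)

lemma fderiv_G1_apply (p v : Fin 3 → ℂ) :
    fderiv ℝ G₁ p v = 4 * ((p 0).re ^ 2 + (p 0).im ^ 2) * ((p 0).re*(v 0).re + (p 0).im*(v 0).im)
      + 2 * ((p 1).re*(v 1).re + (p 1).im*(v 1).im) := by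
  rw [(hasFDeriv_G1 p).fderiv]; simp [Ncl_apply]; ring

lemma fderiv_G2_apply (p v : Fin 3 → ℂ) :
    fderiv ℝ G₂ p v = 2 * ((p 1).re*(v 1).re + (p 1).im*(v 1).im)
      + 2 * ((p 2).re*(v 2).re + (p 2).im*(v 2).im) := by
  rw [(hasFDeriv_G2 p).fderiv]; simp [Ncl_apply]

lemma fderiv_S1_apply (p v : Fin 3 → ℂ) :
    fderiv ℝ S₁ p v = 2 * π * (((p 0).re*(v 0).re + (p 0).im*(v 0).im)
      + ((p 1).re*(v 1).re + (p 1).im*(v 1).im) + ((p 2).re*(v 2).re + (p 2).im*(v 2).im)) := by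
  rw [(hasFDeriv_S1 p).fderiv]; simp [Ncl_apply]; ring

lemma sq_add_sq_eq_zero {x y : ℝ} (h : x ^ 2 + y ^ 2 = 0) : x = 0 ∧ y = 0 := by
  constructor <;> nlinarith [sq_nonneg x, sq_nonneg y]

/-- If all three coordinates of `p` are nonzero, `p` cannot be a critical point. -/
lemma crit_forces (p : Fin 3 → ℂ)
    (hr : 0 < (p 0).re ^ 2 + (p 0).im ^ 2)
    (hs : 0 < (p 1).re ^ 2 + (p 1).im ^ 2)
    (ht : 0 < (p 2).re ^ 2 + (p 2).im ^ 2)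
    (hcrit : ∀ v : Fin 3 → ℂ,
      fderiv ℝ G₁ p v = 0 → fderiv ℝ G₂ p v = 0 → fderiv ℝ S₁ p v = 0) :
    False := by
  set r := (p 0).re ^ 2 + (p 0).im ^ 2 with hrdef
  set s := (p 1).re ^ 2 + (p 1).im ^ 2 with hsdef
  set t := (p 2).re ^ 2 + (p 2).im ^ 2 with htdef
  set a : ℝ := -2 * r ^ 2 / s with hadef
  set b : ℝ := 2 * r ^ 2 / t with hbdef
  set v : Fin 3 → ℂ := ![p 0, (a:ℂ) * p 1, (b:ℂ) * p 2] with hvdef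
  have hv0 : v 0 = p 0 := rfl
  have hv1 : v 1 = (a:ℂ) * p 1 := rfl
  have hv2 : v 2 = (b:ℂ) * p 2 := rfl
  have k0 : (p 0).re*(v 0).re + (p 0).im*(v 0).im = r := by rw [hv0, hrdef]; ring
  have k1 : (p 1).re*(v 1).re + (p 1).im*(v 1).im = -2 * r ^ 2 := by
    rw [hv1]
    simp only [Complex.mul_re, Complex.mul_im, Complex.ofReal_re, Complex.ofReal_im]
    have : (p 1).re * (a * (p 1).re - 0 * (p 1).im) + (p 1).im * (a * (p 1).im + 0 * (p 1).re)
        = a * s := by rw [hsdef]; ring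
    rw [this, hadef, div_mul_cancel₀ _ hs.ne']
  have k2 : (p 2).re*(v 2).re + (p 2).im*(v 2).im = 2 * r ^ 2 := by
    rw [hv2]
    simp only [Complex.mul_re, Complex.mul_im, Complex.ofReal_re, Complex.ofReal_im]
    have : (p 2).re * (b * (p 2).re - 0 * (p 2).im) + (p 2).im * (b * (p 2).im + 0 * (p 2).re)
        = b * t := by rw [htdef]; ring
    rw [this, hbdef, div_mul_cancel₀ _ ht.ne']
  have hG1 : fderiv ℝ G₁ p v = 0 := by
    rw [fderiv_G1_apply, k0, k1, ← hrdef]; ring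
  have hG2 : fderiv ℝ G₂ p v = 0 := by
    rw [fderiv_G2_apply, k1, k2]; ring
  have hS := hcrit v hG1 hG2
  rw [fderiv_S1_apply, k0, k1, k2] at hS
  have h2pr : 2 * π * r = 0 := by linarith [hS]
  nlinarith [Real.pi_pos, hr]

/-- **Example 1 of the paper, the critical submanifolds of `S₁`.**
For `c₁ > c₂ > 0`, the function `S₁ = −λ(Z₁) = π(x₁² + y₁² + c₂)` on `M` attains its maximum
value `π(√c₁ + c₂)` exactly on `maxSet`, its minimum value `π(√(c₁ − c₂) + c₂)` exactly on
`minSet`, and these are its only critical submanifolds on `M`. -/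
theorem example_one_critical_submanifolds (c₁ c₂ : ℝ) (h₁₂ : c₂ < c₁) (h₂ : 0 < c₂) :
    (∀ p ∈ Mset c₁ c₂, S₁ p ≤ π * (Real.sqrt c₁ + c₂)) ∧
    {p ∈ Mset c₁ c₂ | S₁ p = π * (Real.sqrt c₁ + c₂)} = maxSet c₁ c₂ ∧
    (∀ p ∈ Mset c₁ c₂, π * (Real.sqrt (c₁ - c₂) + c₂) ≤ S₁ p) ∧
    {p ∈ Mset c₁ c₂ | S₁ p = π * (Real.sqrt (c₁ - c₂) + c₂)} = minSet c₁ c₂ ∧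
    {p | IsCritOnM c₁ c₂ p} = maxSet c₁ c₂ ∪ minSet c₁ c₂ := by
  have hπ : (0:ℝ) < π := Real.pi_pos
  have hc1 : (0:ℝ) < c₁ := h₂.trans h₁₂
  have hd : (0:ℝ) < c₁ - c₂ := by linarith
  -- basic facts about points of M
  have hfacts : ∀ p ∈ Mset c₁ c₂,
      (p 0).re ^ 2 + (p 0).im ^ 2 = Real.sqrt (c₁ - ((p 1).re ^ 2 + (p 1).im ^ 2)) ∧
      (p 1).re ^ 2 + (p 1).im ^ 2 ≤ c₂ ∧
      S₁ p = π * (((p 0).re ^ 2 + (p 0).im ^ 2) + c₂) := by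
    rintro p ⟨hg1, hg2⟩
    unfold G₁ at hg1; unfold G₂ at hg2
    have h2re := sq_nonneg (p 2).re
    have h2im := sq_nonneg (p 2).im
    have hr0 : 0 ≤ (p 0).re ^ 2 + (p 0).im ^ 2 := by positivity
    refine ⟨?_, by linarith, ?_⟩
    · have h : ((p 0).re ^ 2 + (p 0).im ^ 2) ^ 2 = c₁ - ((p 1).re ^ 2 + (p 1).im ^ 2) := by
        linarith
      rw [← h, Real.sqrt_sq hr0]
    · rw [S1_eq]; linear_combination π * hg2
  -- bounds on r = x₁² + y₁²
  have hub : ∀ p ∈ Mset c₁ c₂, (p 0).re ^ 2 + (p 0).im ^ 2 ≤ Real.sqrt c₁ := by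
    intro p hp
    obtain ⟨hr, hs, -⟩ := hfacts p hp
    rw [hr]
    exact Real.sqrt_le_sqrt (by nlinarith [sq_nonneg (p 1).re, sq_nonneg (p 1).im])
  have hlb : ∀ p ∈ Mset c₁ c₂, Real.sqrt (c₁ - c₂) ≤ (p 0).re ^ 2 + (p 0).im ^ 2 := by
    intro p hp
    obtain ⟨hr, hs, -⟩ := hfacts p hp
    rw [hr]
    exact Real.sqrt_le_sqrt (by linarith)
  have hrpos : ∀ p ∈ Mset c₁ c₂, 0 < (p 0).re ^ 2 + (p 0).im ^ 2 := fun p hp =>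
    lt_of_lt_of_le (Real.sqrt_pos.mpr hd) (hlb p hp)
  -- characterizations of the extremal loci
  have hchar1 : ∀ p ∈ Mset c₁ c₂,
      (p 0).re ^ 2 + (p 0).im ^ 2 = Real.sqrt c₁ →
        (p 1 = 0 ∧ (p 2).re ^ 2 + (p 2).im ^ 2 = c₂) := by
    rintro p hp h
    obtain ⟨hr, hs, -⟩ := hfacts p hp
    obtain ⟨hg1, hg2⟩ := hp
    unfold G₂ at hg2
    rw [hr] at h
    have h1 : c₁ - ((p 1).re ^ 2 + (p 1).im ^ 2) = c₁ :=
      (Real.sqrt_inj (by linarith) hc1.le).mp h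
    have hs0 : (p 1).re ^ 2 + (p 1).im ^ 2 = 0 := by linarith
    obtain ⟨ha, hb⟩ := sq_add_sq_eq_zero hs0
    exact ⟨Complex.ext ha hb, by linarith⟩
  have hchar1' : ∀ p ∈ Mset c₁ c₂, p 1 = 0 →
      ((p 0).re ^ 2 + (p 0).im ^ 2 = Real.sqrt c₁ ∧ (p 2).re ^ 2 + (p 2).im ^ 2 = c₂) := by
    rintro p hp h1
    obtain ⟨hr, -, -⟩ := hfacts p hp
    obtain ⟨-, hg2⟩ := hp
    unfold G₂ at hg2
    have hz : (p 1).re ^ 2 + (p 1).im ^ 2 = 0 := by rw [h1]; simp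
    exact ⟨by rw [hr, hz, sub_zero], by linarith⟩
  have hchar2 : ∀ p ∈ Mset c₁ c₂,
      (p 0).re ^ 2 + (p 0).im ^ 2 = Real.sqrt (c₁ - c₂) →
        ((p 1).re ^ 2 + (p 1).im ^ 2 = c₂ ∧ p 2 = 0) := by
    rintro p hp h
    obtain ⟨hr, hs, -⟩ := hfacts p hp
    obtain ⟨hg1, hg2⟩ := hp
    unfold G₂ at hg2
    rw [hr] at h
    have h1 : c₁ - ((p 1).re ^ 2 + (p 1).im ^ 2) = c₁ - c₂ :=
      (Real.sqrt_inj (by linarith) hd.le).mp h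
    have hsc : (p 1).re ^ 2 + (p 1).im ^ 2 = c₂ := by linarith
    have ht0 : (p 2).re ^ 2 + (p 2).im ^ 2 = 0 := by linarith
    obtain ⟨ha, hb⟩ := sq_add_sq_eq_zero ht0
    exact ⟨hsc, Complex.ext ha hb⟩
  have hchar2' : ∀ p ∈ Mset c₁ c₂, p 2 = 0 →
      ((p 0).re ^ 2 + (p 0).im ^ 2 = Real.sqrt (c₁ - c₂) ∧
        (p 1).re ^ 2 + (p 1).im ^ 2 = c₂) := by
    rintro p hp h2
    obtain ⟨hr, -, -⟩ := hfacts p hp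
    obtain ⟨-, hg2⟩ := hp
    unfold G₂ at hg2
    have hz : (p 2).re ^ 2 + (p 2).im ^ 2 = 0 := by rw [h2]; simp
    have hsc : (p 1).re ^ 2 + (p 1).im ^ 2 = c₂ := by linarith
    exact ⟨by rw [hr, hsc], hsc⟩
  refine ⟨?_, ?_, ?_, ?_, ?_⟩
  · -- upper bound
    intro p hp
    obtain ⟨-, -, hS⟩ := hfacts p hp
    rw [hS]
    nlinarith [hub p hp]
  · -- maximum locus
    ext p
    simp only [Set.mem_setOf_eq, maxSet, Set.mem_sep_iff]
    constructor
    · rintro ⟨hp, hS⟩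
      obtain ⟨-, -, hSf⟩ := hfacts p hp
      rw [hSf] at hS
      have hr : (p 0).re ^ 2 + (p 0).im ^ 2 = Real.sqrt c₁ := by
        have := mul_left_cancel₀ (ne_of_gt hπ) hS
        linarith
      obtain ⟨h1, ht⟩ := hchar1 p hp hr
      exact ⟨hp, hr, h1, ht⟩
    · rintro ⟨hp, hr, -, -⟩
      obtain ⟨-, -, hSf⟩ := hfacts p hp
      exact ⟨hp, by rw [hSf, hr]⟩
  · -- lower bound
    intro p hp
    obtain ⟨-, -, hS⟩ := hfacts p hp
    rw [hS]
    nlinarith [hlb p hp]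
  · -- minimum locus
    ext p
    simp only [Set.mem_setOf_eq, minSet, Set.mem_sep_iff]
    constructor
    · rintro ⟨hp, hS⟩
      obtain ⟨-, -, hSf⟩ := hfacts p hp
      rw [hSf] at hS
      have hr : (p 0).re ^ 2 + (p 0).im ^ 2 = Real.sqrt (c₁ - c₂) := by
        have := mul_left_cancel₀ (ne_of_gt hπ) hS
        linarith
      obtain ⟨hsc, h2⟩ := hchar2 p hp hr
      exact ⟨hp, hr, hsc, h2⟩
    · rintro ⟨hp, hr, -, -⟩
      obtain ⟨-, -, hSf⟩ := hfacts p hp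
      exact ⟨hp, by rw [hSf, hr]⟩
  · -- critical set
    ext p
    simp only [Set.mem_setOf_eq, Set.mem_union, maxSet, minSet, Set.mem_sep_iff, IsCritOnM]
    constructor
    · rintro ⟨hp, hcrit⟩
      by_cases h1 : p 1 = 0
      · left
        obtain ⟨hr, ht⟩ := hchar1' p hp h1
        exact ⟨hp, hr, h1, ht⟩
      · right
        have hs : 0 < (p 1).re ^ 2 + (p 1).im ^ 2 := by
          have := Complex.normSq_pos.mpr h1
          rw [Complex.normSq_apply] at this
          nlinarith [this]
        by_cases h2 : p 2 = 0
        · obtain ⟨hr, hsc⟩ := hchar2' p hp h2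
          exact ⟨hp, hr, hsc, h2⟩
        · have ht : 0 < (p 2).re ^ 2 + (p 2).im ^ 2 := by
            have := Complex.normSq_pos.mpr h2
            rw [Complex.normSq_apply] at this
            nlinarith [this]
          exact (crit_forces p (hrpos p hp) hs ht hcrit).elim
    · rintro (⟨hp, hr, h1, -⟩ | ⟨hp, hr, -, h2⟩)
      · refine ⟨hp, fun v hG1 hG2 => ?_⟩
        have e1 : (p 1).re = 0 := by rw [h1]; simp
        have e1' : (p 1).im = 0 := by rw [h1]; simp
        rw [fderiv_G1_apply, e1, e1'] at hG1
        rw [fderiv_G2_apply, e1, e1'] at hG2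
        have hrp : 0 < (p 0).re ^ 2 + (p 0).im ^ 2 := hrpos p hp
        have hB0 : (p 0).re * (v 0).re + (p 0).im * (v 0).im = 0 := by
          rcases mul_eq_zero.mp (by linarith [hG1] :
            4 * ((p 0).re ^ 2 + (p 0).im ^ 2) * ((p 0).re*(v 0).re + (p 0).im*(v 0).im) = 0)
            with h | h
          · nlinarith [hrp]
          · exact h
        have hB2 : (p 2).re * (v 2).re + (p 2).im * (v 2).im = 0 := by linarith [hG2]
        rw [fderiv_S1_apply, e1, e1']
        linear_combination 2 * π * hB0 + 2 * π * hB2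
      · refine ⟨hp, fun v hG1 hG2 => ?_⟩
        have e2 : (p 2).re = 0 := by rw [h2]; simp
        have e2' : (p 2).im = 0 := by rw [h2]; simp
        rw [fderiv_G2_apply, e2, e2'] at hG2
        have hB1 : (p 1).re * (v 1).re + (p 1).im * (v 1).im = 0 := by linarith [hG2]
        rw [fderiv_G1_apply] at hG1
        have hrp : 0 < (p 0).re ^ 2 + (p 0).im ^ 2 := hrpos p hp
        have hB0 : (p 0).re * (v 0).re + (p 0).im * (v 0).im = 0 := by
          rcases mul_eq_zero.mp (by linarith [hG1, hB1] :
            4 * ((p 0).re ^ 2 + (p 0).im ^ 2) * ((p 0).re*(v 0).re + (p 0).im*(v 0).im) = 0)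
            with h | h
          · nlinarith [hrp]
          · exact h
        rw [fderiv_S1_apply, e2, e2']
        linear_combination 2 * π * hB0 + 2 * π * hB1
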